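/- Let g, Δ, ε, λ be real numbers, μ := (λ+g²)² − 4g²(λ+g²) − Δ², and set a := −(λ+g²−ε), α := 1 − (λ+g²−ε)/2, β := 4g², γ := ½ − (λ+g²+ε)/2, C := μ + 4εg² − ε², and Λ := β(a/2 + α) + γ(a − ½). Then for every real x > 0 with x ≠ 1 and every twice continuously differentiable f : (0,∞) → ℝ, one has x^{−(a−1/2)/2} · ((ϖ_a(K) − Λ)(t ↦ t^{(a−1/2)/2} f(t)))(x) = x(x−1)·f″(x) + [−4g²·x(x−1) + (1 − (λ+g²) + ε)(x−1) − ((λ+g²) + ε)x]·f′(x) + [4g²(λ+g²−ε)x + μ + 4εg² − ε²]·f(x); the right-hand side is x(x−1) times the confluent Heun operator H₁^ε(λ) applied to f. -/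

import Mathlib

open Real

/-- The first order operator `B : g ↦ −g′ + (½(a−½)x⁻¹ + β)·g`. -/
noncomputable def Bop (a β : ℝ) (g : ℝ → ℝ) : ℝ → ℝ := fun x =>
  -deriv g x + ((1 / 2) * (a - 1 / 2) * x⁻¹ + β) * g x

/-- The first order operator `A : h ↦ x·h′ + ¼·h − x²·h′ − ½(a+½)x·h + α·h`. -/
noncomputable def Aop (a α : ℝ) (h : ℝ → ℝ) : ℝ → ℝ := fun x =>
  x * deriv h x + (1 / 4) * h x - x ^ 2 * deriv h x - (1 / 2) * (a + 1 / 2) * x * h x + α * h x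

/-- The second order operator `ϖ_a(K(α,β,γ;C)) : g ↦ A(Bg) + 2γ·x·g′ + C·g`. -/
noncomputable def piK (a α β γ C : ℝ) (g : ℝ → ℝ) : ℝ → ℝ := fun x =>
  Aop a α (Bop a β g) x + 2 * γ * x * deriv g x + C * g x

/-- The constant `λ_a(α,β,γ) = β(a/2 + α) + γ(a − ½)`. -/
noncomputable def lamConst (a α β γ : ℝ) : ℝ := β * (a / 2 + α) + γ * (a - 1 / 2)

/-- The confluent Heun picture of `ϖ_a(K) − Λ` for the first choice of parameters:
conjugation by `x^{(a−1/2)/2}` turns it into `x(x−1)` times the confluent Heun operator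
`H₁^ε(λ)` of the asymmetric quantum Rabi model. -/
theorem piK_confluentHeun_one (g Δ ε lam : ℝ)
    (μ : ℝ) (hμ : μ = (lam + g ^ 2) ^ 2 - 4 * g ^ 2 * (lam + g ^ 2) - Δ ^ 2)
    (a α β γ C Λ : ℝ)
    (ha : a = -(lam + g ^ 2 - ε))
    (hα : α = 1 - (lam + g ^ 2 - ε) / 2)
    (hβ : β = 4 * g ^ 2)
    (hγ : γ = 1 / 2 - (lam + g ^ 2 + ε) / 2)
    (hC : C = μ + 4 * ε * g ^ 2 - ε ^ 2)
    (hΛ : Λ = β * (a / 2 + α) + γ * (a - 1 / 2))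
    (x : ℝ) (hx : 0 < x) (hx1 : x ≠ 1)
    (f : ℝ → ℝ) (hf : ContDiffOn ℝ 2 f (Set.Ioi (0 : ℝ))) :
    x ^ (-(a - 1 / 2) / 2) *
        (piK a α β γ C (fun t : ℝ => t ^ ((a - 1 / 2) / 2) * f t) x -
          Λ * ((fun t : ℝ => t ^ ((a - 1 / 2) / 2) * f t) x)) =
      x * (x - 1) * deriv (deriv f) x +
        (-(4 * g ^ 2) * (x * (x - 1)) + (1 - (lam + g ^ 2) + ε) * (x - 1) -
          ((lam + g ^ 2) + ε) * x) * deriv f x +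
        (4 * g ^ 2 * (lam + g ^ 2 - ε) * x + μ + 4 * ε * g ^ 2 - ε ^ 2) * f x := by
  have hx0 : x ≠ 0 := ne_of_gt hx
  set c : ℝ := (a - 1 / 2) / 2 with hc
  have hfd : ∀ t ∈ Set.Ioi (0:ℝ), HasDerivAt f (deriv f t) t := fun t ht =>
    (((hf.contDiffAt (isOpen_Ioi.mem_nhds ht)).differentiableAt (by norm_num)).hasDerivAt)
  have hf' : ContDiffOn ℝ 1 (deriv f) (Set.Ioi (0:ℝ)) :=
    hf.deriv_of_isOpen isOpen_Ioi (by norm_num)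
  have hfd' : HasDerivAt (deriv f) (deriv (deriv f) x) x :=
    ((hf'.contDiffAt (isOpen_Ioi.mem_nhds hx)).differentiableAt one_ne_zero).hasDerivAt
  have hg : ∀ t ∈ Set.Ioi (0:ℝ), HasDerivAt (fun t : ℝ => t ^ c * f t)
      (c * t ^ (c - 1) * f t + t ^ c * deriv f t) t := fun t ht =>
    (Real.hasDerivAt_rpow_const (Or.inl (ne_of_gt ht))).mul (hfd t ht)
  -- value of B on Ioi 0
  have hBeq : ∀ t ∈ Set.Ioi (0:ℝ),
      Bop a β (fun t : ℝ => t ^ c * f t) t = t ^ c * (β * f t - deriv f t) := by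
    intro t ht
    have ht0 : (t:ℝ) ≠ 0 := ne_of_gt ht
    have hpow : t ^ (c - 1) = t ^ c * t⁻¹ := by
      rw [Real.rpow_sub ht, Real.rpow_one, div_eq_mul_inv]
    simp only [Bop, (hg t ht).deriv, hpow]
    have h2 : (1 / 2 : ℝ) * (a - 1 / 2) = c := by rw [hc]; ring
    rw [h2]; ring
  -- derivative of B at x
  have hh : HasDerivAt (fun t : ℝ => t ^ c * (β * f t - deriv f t))
      (c * x ^ (c - 1) * (β * f x - deriv f x) +
        x ^ c * (β * deriv f x - deriv (deriv f) x)) x :=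
    (Real.hasDerivAt_rpow_const (Or.inl hx0)).mul
      (((hfd x hx).const_mul β).sub hfd')
  have hBd : deriv (Bop a β (fun t : ℝ => t ^ c * f t)) x =
      c * x ^ (c - 1) * (β * f x - deriv f x) +
        x ^ c * (β * deriv f x - deriv (deriv f) x) := by
    have heq : Bop a β (fun t : ℝ => t ^ c * f t) =ᶠ[nhds x]
        (fun t : ℝ => t ^ c * (β * f t - deriv f t)) :=
      Filter.eventually_of_mem (isOpen_Ioi.mem_nhds hx) hBeq
    rw [heq.deriv_eq, hh.deriv]
  have hpow : x ^ (c - 1) = x ^ c * x⁻¹ := by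
    rw [Real.rpow_sub hx, Real.rpow_one, div_eq_mul_inv]
  have hneg : x ^ (-(a - 1 / 2) / 2) = (x ^ c)⁻¹ := by
    rw [neg_div, ← hc, Real.rpow_neg hx.le]
  have hxc : (x:ℝ) ^ c ≠ 0 := ne_of_gt (Real.rpow_pos_of_pos hx c)
  simp only [piK, Aop, hBd, hBeq x hx, (hg x hx).deriv, hpow, hneg]
  clear_value c
  subst hμ hβ hΛ hγ hα hC ha
  rw [hc]
  field_simp
  ring
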